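/- Let P be a Markov transition kernel on (X,B) with invariant probability measure π, μ a probability measure, θ ∈ [0,1), Q = θP + (1−θ)μ, and π_Q = (1−θ) Σ_{i=0}^∞ θ^i μP^i. Suppose ⦀P^n − π⦀_{V^α} ≤ C0 ρ^n for all n (ρ ∈ (0,1)) and μ(V^α) < ∞. Then for every g with |g|_{V^α} < ∞ and every k ≥ 0, writing ḡ = g − π(g): Q^k g − π_Q(g) = θ^k P^k ḡ − (1−θ) Σ_{i=k}^∞ θ^i μ(P^i ḡ). -/

import Mathlib

open MeasureTheory Filter
open scoped ENNReal

namespace MixtureKernelIdentity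

variable {X : Type*} [MeasurableSpace X]

/-- `iter P n` is the `n`-step transition kernel `P^n`. -/
noncomputable def iter (P : X → Measure X) : ℕ → X → Measure X
  | 0 => fun x => Measure.dirac x
  | n + 1 => fun x => (iter P n x).bind P

/-- The mixture kernel `Q(x,·) = θ P(x,·) + (1−θ) μ(·)`. -/
noncomputable def mixK (P : X → Measure X) (μ : Measure X) (θ : ℝ) : X → Measure X :=
  fun x => ENNReal.ofReal θ • P x + ENNReal.ofReal (1 - θ) • μ

/-- The measure `π_Q = (1−θ) Σ_{i=0}^∞ θ^i μP^i`. -/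
noncomputable def piQ (P : X → Measure X) (μ : Measure X) (θ : ℝ) : Measure X :=
  ENNReal.ofReal (1 - θ) •
    Measure.sum (fun i : ℕ => ENNReal.ofReal θ ^ i • μ.bind (iter P i))

lemma measurable_iter {P : X → Measure X} (hP : Measurable P) :
    ∀ n, Measurable (iter P n)
  | 0 => Measure.measurable_dirac
  | (n+1) => (Measure.measurable_bind' hP).comp (measurable_iter hP n)

lemma isProb_bind {P : X → Measure X} (hP : Measurable P)
    (hPp : ∀ x, IsProbabilityMeasure (P x)) (ν : Measure X) [IsProbabilityMeasure ν] :
    IsProbabilityMeasure (ν.bind P) := by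
  constructor
  rw [Measure.bind_apply MeasurableSet.univ hP.aemeasurable]
  simp [measure_univ]

lemma isProb_iter {P : X → Measure X} (hP : Measurable P)
    (hPp : ∀ x, IsProbabilityMeasure (P x)) : ∀ n x, IsProbabilityMeasure (iter P n x)
  | 0, x => by show IsProbabilityMeasure (Measure.dirac x); infer_instance
  | (n+1), x => by
      haveI := isProb_iter hP hPp n x
      exact isProb_bind hP hPp _

lemma bind_add_left (ν₁ ν₂ : Measure X) {f : X → Measure X} (hf : Measurable f) :
    (ν₁ + ν₂).bind f = ν₁.bind f + ν₂.bind f := by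
  ext s hs
  simp [Measure.bind_apply hs hf.aemeasurable, lintegral_add_measure]

lemma bind_smul_left (c : ℝ≥0∞) (ν : Measure X) {f : X → Measure X} (hf : Measurable f) :
    (c • ν).bind f = c • ν.bind f := by
  ext s hs
  simp [Measure.bind_apply hs hf.aemeasurable, lintegral_smul_measure]

lemma bind_sum_left {ι : Type*} (s : Finset ι) (ν : ι → Measure X) {f : X → Measure X}
    (hf : Measurable f) : (∑ i ∈ s, ν i).bind f = ∑ i ∈ s, (ν i).bind f := by
  classical
  induction s using Finset.induction with
  | empty => simp [Measure.bind_zero_left]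
  | insert _ _ hnot ih =>
      rw [Finset.sum_insert hnot, Finset.sum_insert hnot, bind_add_left _ _ hf, ih]

lemma measurable_mixK {P : X → Measure X} (hP : Measurable P) (μ : Measure X) (θ : ℝ) :
    Measurable (mixK P μ θ) := by
  rw [Measure.measurable_measure]
  intro s hs
  simp only [mixK, Measure.add_apply, Measure.smul_apply, smul_eq_mul]
  exact (((Measure.measurable_coe hs).comp hP).const_mul _).add measurable_const

lemma bind_mixK {P : X → Measure X} (hP : Measurable P) (μ : Measure X) (θ : ℝ)
    (ν : Measure X) [IsProbabilityMeasure ν] :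
    ν.bind (mixK P μ θ) = ENNReal.ofReal θ • ν.bind P + ENNReal.ofReal (1 - θ) • μ := by
  ext s hs
  rw [Measure.bind_apply hs (measurable_mixK hP μ θ).aemeasurable]
  simp only [mixK, Measure.add_apply, Measure.smul_apply, smul_eq_mul]
  have hm : Measurable fun a => (P a) s := (Measure.measurable_coe hs).comp hP
  rw [lintegral_add_left (hm.const_mul _), lintegral_const_mul _ hm, lintegral_const,
    measure_univ, mul_one, Measure.bind_apply hs hP.aemeasurable]

lemma coeff_real (θ : ℝ) (k : ℕ) :
    θ ^ k * (1 - θ) + ∑ i ∈ Finset.range k, (1 - θ) * θ ^ i * (1 - θ) = 1 - θ := by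
  induction k with
  | zero => simp
  | succ k ih =>
      rw [Finset.sum_range_succ]
      linear_combination ih

lemma iter_mixK_eq {P : X → Measure X} (hP : Measurable P)
    (hPp : ∀ x, IsProbabilityMeasure (P x)) (μ : Measure X) [hμ : IsProbabilityMeasure μ]
    (θ : ℝ) (hθ0 : 0 ≤ θ) (hθ1 : θ ≤ 1) : ∀ (k : ℕ) (x : X),
    iter (mixK P μ θ) k x = ENNReal.ofReal θ ^ k • iter P k x +
      ∑ i ∈ Finset.range k,
        (ENNReal.ofReal (1 - θ) * ENNReal.ofReal θ ^ i) • μ.bind (iter P i) := by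
  intro k
  induction k with
  | zero => intro x; simp [iter]
  | succ k ih =>
      intro x
      have hQ : Measurable (mixK P μ θ) := measurable_mixK hP μ θ
      have h1θ : (0:ℝ) ≤ 1 - θ := by linarith
      haveI : IsProbabilityMeasure (iter P k x) := isProb_iter hP hPp k x
      have hbp : ∀ i, IsProbabilityMeasure (μ.bind (iter P i)) := fun i =>
        isProb_bind (measurable_iter hP i) (isProb_iter hP hPp i) μ
      have step : iter (mixK P μ θ) (k+1) x = (iter (mixK P μ θ) k x).bind (mixK P μ θ) := rfl
      rw [step, ih x, bind_add_left _ _ hQ, bind_smul_left _ _ hQ, bind_sum_left _ _ hQ,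
        bind_mixK hP μ θ (iter P k x)]
      have hPbind : (iter P k x).bind P = iter P (k+1) x := rfl
      rw [hPbind]
      have hsum : ∀ i ∈ Finset.range k,
          ((ENNReal.ofReal (1 - θ) * ENNReal.ofReal θ ^ i) • μ.bind (iter P i)).bind (mixK P μ θ)
          = (ENNReal.ofReal (1-θ) * ENNReal.ofReal θ ^ (i+1)) • μ.bind (iter P (i+1))
            + ((ENNReal.ofReal (1-θ) * ENNReal.ofReal θ ^ i) * ENNReal.ofReal (1-θ)) • μ := by
        intro i _
        haveI := hbp i
        rw [bind_smul_left _ _ hQ, bind_mixK hP μ θ (μ.bind (iter P i))]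
        have h2 : (μ.bind (iter P i)).bind P = μ.bind (iter P (i+1)) := by
          rw [Measure.bind_bind (measurable_iter hP i).aemeasurable hP.aemeasurable]; rfl
        rw [h2, smul_add, smul_smul, smul_smul]
        congr 2
        ring
      rw [Finset.sum_congr rfl hsum, Finset.sum_add_distrib, ← Finset.sum_smul,
        Finset.sum_range_succ'
          (fun i => (ENNReal.ofReal (1-θ) * ENNReal.ofReal θ ^ i) • μ.bind (iter P i)) k]
      have h0 : (ENNReal.ofReal (1-θ) * ENNReal.ofReal θ ^ 0) • μ.bind (iter P 0) =
          ENNReal.ofReal (1-θ) • μ := by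
        have : μ.bind (iter P 0) = μ := Measure.bind_dirac
        rw [this, pow_zero, mul_one]
      rw [h0, smul_add, smul_smul, ← pow_succ]
      have hco : ENNReal.ofReal θ ^ k * ENNReal.ofReal (1-θ)
          + ∑ i ∈ Finset.range k,
              (ENNReal.ofReal (1-θ) * ENNReal.ofReal θ ^ i) * ENNReal.ofReal (1-θ)
          = ENNReal.ofReal (1-θ) := by
        have hpow : ∀ i : ℕ, ENNReal.ofReal θ ^ i = ENNReal.ofReal (θ ^ i) := fun i =>
          (ENNReal.ofReal_pow hθ0 i).symm
        simp only [hpow, ← ENNReal.ofReal_mul (pow_nonneg hθ0 _),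
          ← ENNReal.ofReal_mul h1θ, ← ENNReal.ofReal_mul (mul_nonneg h1θ (pow_nonneg hθ0 _))]
        rw [← ENNReal.ofReal_sum_of_nonneg, ← ENNReal.ofReal_add]
        · exact congrArg _ (coeff_real θ k)
        · positivity
        · exact Finset.sum_nonneg fun i _ => by positivity
        · intro i _; positivity
      calc ENNReal.ofReal θ ^ (k+1) • iter P (k+1) x
            + ENNReal.ofReal θ ^ k • ENNReal.ofReal (1-θ) • μ
            + (∑ i ∈ Finset.range k,
                (ENNReal.ofReal (1-θ) * ENNReal.ofReal θ ^ (i+1)) • μ.bind (iter P (i+1))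
              + (∑ i ∈ Finset.range k,
                  (ENNReal.ofReal (1-θ) * ENNReal.ofReal θ ^ i) * ENNReal.ofReal (1-θ)) • μ)
          = ENNReal.ofReal θ ^ (k+1) • iter P (k+1) x
            + (∑ i ∈ Finset.range k,
                (ENNReal.ofReal (1-θ) * ENNReal.ofReal θ ^ (i+1)) • μ.bind (iter P (i+1))
              + (ENNReal.ofReal θ ^ k * ENNReal.ofReal (1-θ)
                + ∑ i ∈ Finset.range k,
                    (ENNReal.ofReal (1-θ) * ENNReal.ofReal θ ^ i) * ENNReal.ofReal (1-θ)) • μ) := by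
            rw [add_smul, smul_smul]; abel
      _ = ENNReal.ofReal θ ^ (k+1) • iter P (k+1) x
            + (∑ i ∈ Finset.range k,
                (ENNReal.ofReal (1-θ) * ENNReal.ofReal θ ^ (i+1)) • μ.bind (iter P (i+1))
              + ENNReal.ofReal (1-θ) • μ) := by rw [hco]

lemma integrable_of_bound {ν : Measure X} {g h : X → ℝ} (hg : Measurable g)
    (hbd : ∀ y, |g y| ≤ h y) (hfin : ∫⁻ y, ENNReal.ofReal (h y) ∂ν < ⊤) :
    Integrable g ν := by
  refine ⟨hg.aestronglyMeasurable, ?_⟩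
  rw [hasFiniteIntegral_iff_norm]
  refine lt_of_le_of_lt (lintegral_mono fun y => ?_) hfin
  exact ENNReal.ofReal_le_ofReal (by rw [Real.norm_eq_abs]; exact hbd y)

lemma integrable_min_nat {ν : Measure X} [IsFiniteMeasure ν] {f : X → ℝ} (hf : Measurable f)
    (hf0 : ∀ y, 0 ≤ f y) (m : ℕ) : Integrable (fun y => min (f y) (m:ℝ)) ν := by
  refine ⟨(hf.min measurable_const).aestronglyMeasurable,
    HasFiniteIntegral.of_bounded (C := (m:ℝ)) (ae_of_all _ fun y => ?_)⟩
  rw [Real.norm_eq_abs, abs_of_nonneg (le_min (hf0 y) (Nat.cast_nonneg m))]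
  exact min_le_right _ _

lemma lintegral_trunc_le {ν : Measure X} [IsFiniteMeasure ν] {f : X → ℝ}
    (hf : Measurable f) (hf0 : ∀ y, 0 ≤ f y) (L : ℝ≥0∞)
    (hb : ∀ m : ℕ, ENNReal.ofReal (∫ y, min (f y) (m:ℝ) ∂ν) ≤ L) :
    ∫⁻ y, ENNReal.ofReal (f y) ∂ν ≤ L := by
  have hmeas : ∀ m : ℕ, Measurable fun y => ENNReal.ofReal (min (f y) (m:ℝ)) :=
    fun m => (hf.min measurable_const).ennreal_ofReal
  have hmono : Monotone fun (m : ℕ) (y : X) => ENNReal.ofReal (min (f y) (m:ℝ)) := by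
    intro m m' hmm y
    exact ENNReal.ofReal_le_ofReal (min_le_min le_rfl (Nat.cast_le.2 hmm))
  have hsup : ∀ y, (⨆ m : ℕ, ENNReal.ofReal (min (f y) (m:ℝ))) = ENNReal.ofReal (f y) := by
    intro y
    refine le_antisymm (iSup_le fun m => ENNReal.ofReal_le_ofReal (min_le_left _ _)) ?_
    refine le_iSup_of_le ⌈f y⌉₊ (le_of_eq ?_)
    rw [min_eq_left (Nat.le_ceil _)]
  calc ∫⁻ y, ENNReal.ofReal (f y) ∂ν
      = ∫⁻ y, ⨆ m : ℕ, ENNReal.ofReal (min (f y) (m:ℝ)) ∂ν := by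
        congr 1; funext y; rw [hsup y]
    _ = ⨆ m : ℕ, ∫⁻ y, ENNReal.ofReal (min (f y) (m:ℝ)) ∂ν := lintegral_iSup hmeas hmono
    _ ≤ L := by
        refine iSup_le fun m => ?_
        rw [← ofReal_integral_eq_lintegral_ofReal (integrable_min_nat hf hf0 m)
          (ae_of_all _ fun y => le_min (hf0 y) (Nat.cast_nonneg m))]
        exact hb m



/-- Let `P` have invariant probability `π` with
`⦀P^n − π⦀_{V^α} ≤ C0 ρ^n`, let `μ` be a probability measure with `μ(V^α) < ∞`, `θ ∈ [0,1)`,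
`Q = θP + (1−θ)μ` and `π_Q = (1−θ) Σ_{i≥0} θ^i μP^i`.  Then for every `g` with
`|g|_{V^α} < ∞` and every `k ≥ 0`, writing `ḡ = g − π(g)`:
`Q^k g − π_Q(g) = θ^k P^k ḡ − (1−θ) Σ_{i=k}^∞ θ^i μ(P^i ḡ)` (as functions of `x`). -/
theorem mixture_kernel_expansion
    (P : X → Measure X) (hPmeas : Measurable P)
    (hPprob : ∀ x, IsProbabilityMeasure (P x))
    (π : Measure X) (hπ : IsProbabilityMeasure π) (hinv : π.bind P = π)
    (V : X → ℝ) (hVmeas : Measurable V) (hV1 : ∀ x, 1 ≤ V x)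
    (α : ℝ) (hα0 : 0 ≤ α) (hα1 : α ≤ 1)
    (ρ C0 : ℝ) (hρ0 : 0 < ρ) (hρ1 : ρ < 1) (hC0 : 0 ≤ C0)
    -- `⦀P^n − π⦀_{V^α} ≤ C0 ρ^n` for all `n ≥ 0`
    (hA : ∀ f : X → ℝ, Measurable f → (∀ x, |f x| ≤ V x ^ α) →
      ∀ (n : ℕ) (x : X),
        |∫ y, f y ∂(iter P n x) - ∫ y, f y ∂π| ≤ C0 * ρ ^ n * V x ^ α)
    (μ : Measure X) (hμ : IsProbabilityMeasure μ)
    -- `μ(V^α) < ∞`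
    (hμV : ∫⁻ x, ENNReal.ofReal (V x ^ α) ∂μ < ⊤)
    (θ : ℝ) (hθ0 : 0 ≤ θ) (hθ1 : θ < 1) :
    ∀ (g : X → ℝ) (κg : ℝ), Measurable g → (∀ x, |g x| ≤ κg * V x ^ α) →
      ∀ (k : ℕ) (x : X),
        ∫ y, g y ∂(iter (mixK P μ θ) k x) - ∫ y, g y ∂(piQ P μ θ) =
          θ ^ k * ∫ y, (g y - ∫ z, g z ∂π) ∂(iter P k x) -
            (1 - θ) *
              ∑' i : ℕ, θ ^ (k + i) *
                ∫ y, (g y - ∫ z, g z ∂π) ∂(μ.bind (iter P (k + i))) := by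
  intro g κg hgmeas hgbd k x
  have h1θ : (0:ℝ) < 1 - θ := by linarith
  have hV0 : ∀ y, (0:ℝ) ≤ V y := fun y => le_trans zero_le_one (hV1 y)
  have hW0 : ∀ y, (0:ℝ) ≤ V y ^ α := fun y => Real.rpow_nonneg (hV0 y) α
  have hWmeas : Measurable fun y => V y ^ α := by measurability
  have htr_meas : ∀ m : ℕ, Measurable fun y => min (V y ^ α) (m:ℝ) :=
    fun m => hWmeas.min measurable_const
  have htr_bd : ∀ (m : ℕ) (y : X), |min (V y ^ α) (m:ℝ)| ≤ V y ^ α := fun m y => by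
    rw [abs_of_nonneg (le_min (hW0 y) (Nat.cast_nonneg m))]; exact min_le_left _ _
  -- prob instances
  have hprob_iter : ∀ n z, IsProbabilityMeasure (iter P n z) := isProb_iter hPmeas hPprob
  have hprob_bind : ∀ n, IsProbabilityMeasure (μ.bind (iter P n)) := fun n =>
    isProb_bind (measurable_iter hPmeas n) (hprob_iter n) μ
  -- π bound
  have hπtr : ∀ m : ℕ, ∫ y, min (V y ^ α) (m:ℝ) ∂π ≤ (1 + C0) * V x ^ α := by
    intro m
    have h := hA _ (htr_meas m) (htr_bd m) 0 x
    have h0 : (∫ y, min (V y ^ α) (m:ℝ) ∂(iter P 0 x)) = min (V x ^ α) (m:ℝ) := by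
      have h00 : iter P 0 x = Measure.dirac x := rfl
      rw [h00, integral_dirac' _ _ (htr_meas m).stronglyMeasurable]
    rw [h0, pow_zero] at h
    have h2 := (abs_le.1 h).1
    have h3 : min (V x ^ α) (m:ℝ) ≤ V x ^ α := min_le_left _ _
    nlinarith
  set E := ∫⁻ y, ENNReal.ofReal (V y ^ α) ∂π with hEdef
  have hEle : E ≤ ENNReal.ofReal ((1 + C0) * V x ^ α) :=
    lintegral_trunc_le hWmeas hW0 _ (fun m => ENNReal.ofReal_le_ofReal (hπtr m))
  have hEfin : E ≠ ⊤ := (lt_of_le_of_lt hEle ENNReal.ofReal_lt_top).ne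
  -- per-point bound for iter P n z
  have hiter : ∀ (n : ℕ) (z : X),
      ∫⁻ y, ENNReal.ofReal (V y ^ α) ∂(iter P n z) ≤ ENNReal.ofReal (C0 * V z ^ α) + E := by
    intro n z
    haveI := hprob_iter n z
    refine lintegral_trunc_le hWmeas hW0 _ (fun m => ?_)
    have h := hA _ (htr_meas m) (htr_bd m) n z
    have hb1 : ∫ y, min (V y ^ α) (m:ℝ) ∂(iter P n z)
        ≤ C0 * V z ^ α + ∫ y, min (V y ^ α) (m:ℝ) ∂π := by
      have h2 := (abs_le.1 h).2
      have hρn : ρ ^ n ≤ 1 := pow_le_one₀ hρ0.le hρ1.le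
      have h3 : C0 * ρ ^ n * V z ^ α ≤ C0 * V z ^ α :=
        mul_le_mul_of_nonneg_right (mul_le_of_le_one_right hC0 hρn) (hW0 z)
      linarith
    calc ENNReal.ofReal (∫ y, min (V y ^ α) (m:ℝ) ∂(iter P n z))
        ≤ ENNReal.ofReal (C0 * V z ^ α + ∫ y, min (V y ^ α) (m:ℝ) ∂π) :=
          ENNReal.ofReal_le_ofReal hb1
      _ ≤ ENNReal.ofReal (C0 * V z ^ α) + ENNReal.ofReal (∫ y, min (V y ^ α) (m:ℝ) ∂π) :=
          ENNReal.ofReal_add_le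
      _ ≤ ENNReal.ofReal (C0 * V z ^ α) + E := by
          refine add_le_add le_rfl ?_
          rw [ofReal_integral_eq_lintegral_ofReal (integrable_min_nat hWmeas hW0 m)
            (ae_of_all _ fun y => le_min (hW0 y) (Nat.cast_nonneg m))]
          exact lintegral_mono fun y => ENNReal.ofReal_le_ofReal (min_le_left _ _)
  have hiterfin : ∀ n z, ∫⁻ y, ENNReal.ofReal (V y ^ α) ∂(iter P n z) < ⊤ := fun n z =>
    lt_of_le_of_lt (hiter n z)
      (ENNReal.add_lt_top.2 ⟨ENNReal.ofReal_lt_top, hEfin.lt_top⟩)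
  -- bound for μ.bind (iter P n)
  set K := ENNReal.ofReal C0 * (∫⁻ y, ENNReal.ofReal (V y ^ α) ∂μ) + E with hKdef
  have hKfin : K ≠ ⊤ := by
    rw [hKdef]
    exact (ENNReal.add_lt_top.2
      ⟨ENNReal.mul_lt_top ENNReal.ofReal_lt_top hμV, hEfin.lt_top⟩).ne
  have hbind : ∀ n, ∫⁻ y, ENNReal.ofReal (V y ^ α) ∂(μ.bind (iter P n)) ≤ K := by
    intro n
    rw [Measure.lintegral_bind (measurable_iter hPmeas n).aemeasurable hWmeas.ennreal_ofReal.aemeasurable]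
    calc ∫⁻ z, ∫⁻ y, ENNReal.ofReal (V y ^ α) ∂(iter P n z) ∂μ
        ≤ ∫⁻ z, (ENNReal.ofReal (C0 * V z ^ α) + E) ∂μ := lintegral_mono fun z => hiter n z
      _ = K := by
          rw [lintegral_add_right _ measurable_const, lintegral_const, measure_univ, mul_one,
            hKdef]
          congr 1
          simp_rw [ENNReal.ofReal_mul hC0]
          rw [lintegral_const_mul _ hWmeas.ennreal_ofReal]
  have hbindfin : ∀ n, ∫⁻ y, ENNReal.ofReal (V y ^ α) ∂(μ.bind (iter P n)) < ⊤ := fun n =>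
    lt_of_le_of_lt (hbind n) hKfin.lt_top
  -- integrability of g
  have hgbd' : ∀ y, |g y| ≤ |κg| * V y ^ α := fun y =>
    (hgbd y).trans (mul_le_mul_of_nonneg_right (le_abs_self κg) (hW0 y))
  have hWlin : ∀ ν : Measure X, ∫⁻ y, ENNReal.ofReal (|κg| * V y ^ α) ∂ν
      = ENNReal.ofReal |κg| * ∫⁻ y, ENNReal.ofReal (V y ^ α) ∂ν := fun ν => by
    simp_rw [ENNReal.ofReal_mul (abs_nonneg κg)]
    exact lintegral_const_mul _ hWmeas.ennreal_ofReal
  have hint_iter : ∀ n z, Integrable g (iter P n z) := fun n z =>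
    integrable_of_bound hgmeas hgbd'
      (by rw [hWlin]; exact ENNReal.mul_lt_top ENNReal.ofReal_lt_top (hiterfin n z))
  have hint_bind : ∀ n, Integrable g (μ.bind (iter P n)) := fun n =>
    integrable_of_bound hgmeas hgbd'
      (by rw [hWlin]; exact ENNReal.mul_lt_top ENNReal.ofReal_lt_top (hbindfin n))
  set J : ℕ → ℝ := fun i => ∫ y, g y ∂(μ.bind (iter P i)) with hJdef
  have hglin : ∀ i, ∫⁻ y, ENNReal.ofReal ‖g y‖ ∂(μ.bind (iter P i))
      ≤ ENNReal.ofReal |κg| * K := by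
    intro i
    calc ∫⁻ y, ENNReal.ofReal ‖g y‖ ∂(μ.bind (iter P i))
        ≤ ∫⁻ y, ENNReal.ofReal (|κg| * V y ^ α) ∂(μ.bind (iter P i)) :=
          lintegral_mono fun y => ENNReal.ofReal_le_ofReal
            (by rw [Real.norm_eq_abs]; exact hgbd' y)
      _ = ENNReal.ofReal |κg| * ∫⁻ y, ENNReal.ofReal (V y ^ α) ∂(μ.bind (iter P i)) := hWlin _
      _ ≤ ENNReal.ofReal |κg| * K := mul_le_mul_right (hbind i) _
  have hJbd : ∀ i, |J i| ≤ |κg| * K.toReal := by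
    intro i
    have h1 : |J i| ≤ (∫⁻ y, ENNReal.ofReal ‖g y‖ ∂(μ.bind (iter P i))).toReal := by
      have := norm_integral_le_lintegral_norm (μ := μ.bind (iter P i)) g
      simpa [Real.norm_eq_abs, hJdef] using this
    refine h1.trans ?_
    have h2 := ENNReal.toReal_mono
      (ENNReal.mul_lt_top ENNReal.ofReal_lt_top hKfin.lt_top).ne (hglin i)
    rwa [ENNReal.toReal_mul, ENNReal.toReal_ofReal (abs_nonneg _)] at h2
  -- summability
  have hgeo : Summable fun i : ℕ => θ ^ i := summable_geometric_of_lt_one hθ0 hθ1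
  have hsumJ : Summable fun i : ℕ => θ ^ i * J i := by
    refine Summable.of_norm_bounded (hgeo.mul_left (|κg| * K.toReal)) fun i => ?_
    rw [Real.norm_eq_abs, abs_mul, abs_of_nonneg (pow_nonneg hθ0 i)]
    calc θ ^ i * |J i| ≤ θ ^ i * (|κg| * K.toReal) :=
          mul_le_mul_of_nonneg_left (hJbd i) (pow_nonneg hθ0 i)
      _ = |κg| * K.toReal * θ ^ i := by ring
  -- integral over piQ
  have hintsum : Integrable g
      (Measure.sum fun i : ℕ => ENNReal.ofReal θ ^ i • μ.bind (iter P i)) := by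
    refine ⟨hgmeas.aestronglyMeasurable, ?_⟩
    rw [hasFiniteIntegral_iff_norm, lintegral_sum_measure]
    calc ∑' i : ℕ, ∫⁻ y, ENNReal.ofReal ‖g y‖ ∂(ENNReal.ofReal θ ^ i • μ.bind (iter P i))
        = ∑' i : ℕ, ENNReal.ofReal θ ^ i
            * ∫⁻ y, ENNReal.ofReal ‖g y‖ ∂(μ.bind (iter P i)) := by
          simp [lintegral_smul_measure]
      _ ≤ ∑' i : ℕ, ENNReal.ofReal θ ^ i * (ENNReal.ofReal |κg| * K) := by
          gcongr with i
          exact hglin i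
      _ = (ENNReal.ofReal |κg| * K) * ∑' i : ℕ, ENNReal.ofReal θ ^ i := by
          rw [ENNReal.tsum_mul_right]; ring
      _ < ⊤ := by
          rw [ENNReal.tsum_geometric]
          refine ENNReal.mul_lt_top (ENNReal.mul_lt_top ENNReal.ofReal_lt_top hKfin.lt_top) ?_
          exact ENNReal.inv_lt_top.2 (tsub_pos_iff_lt.2 (ENNReal.ofReal_lt_one.2 hθ1))
  have hpiQ : ∫ y, g y ∂(piQ P μ θ) = (1-θ) * ∑' i : ℕ, θ ^ i * J i := by
    have hrfl : piQ P μ θ = ENNReal.ofReal (1-θ) •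
        Measure.sum (fun i : ℕ => ENNReal.ofReal θ ^ i • μ.bind (iter P i)) := rfl
    rw [hrfl, integral_smul_measure, integral_sum_measure hintsum,
      ENNReal.toReal_ofReal h1θ.le, smul_eq_mul]
    congr 1
    refine tsum_congr fun i => ?_
    rw [integral_smul_measure, ENNReal.toReal_pow, ENNReal.toReal_ofReal hθ0, smul_eq_mul,
      hJdef]
  -- integral over iter Q
  have hQk : ∫ y, g y ∂(iter (mixK P μ θ) k x)
      = θ ^ k * (∫ y, g y ∂(iter P k x))
        + ∑ i ∈ Finset.range k, (1-θ) * (θ ^ i * J i) := by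
    rw [iter_mixK_eq hPmeas hPprob μ θ hθ0 hθ1.le k x]
    have hI1 : Integrable g (ENNReal.ofReal θ ^ k • iter P k x) :=
      (hint_iter k x).smul_measure (ENNReal.pow_ne_top ENNReal.ofReal_ne_top)
    have hI2 : ∀ i ∈ Finset.range k, Integrable g
        ((ENNReal.ofReal (1-θ) * ENNReal.ofReal θ ^ i) • μ.bind (iter P i)) := fun i _ =>
      (hint_bind i).smul_measure
        (ENNReal.mul_ne_top ENNReal.ofReal_ne_top (ENNReal.pow_ne_top ENNReal.ofReal_ne_top))
    rw [integral_add_measure hI1 (integrable_finset_sum_measure.2 hI2),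
      integral_finset_sum_measure hI2, integral_smul_measure,
      ENNReal.toReal_pow, ENNReal.toReal_ofReal hθ0, smul_eq_mul]
    congr 1
    refine Finset.sum_congr rfl fun i _ => ?_
    rw [integral_smul_measure, ENNReal.toReal_mul, ENNReal.toReal_pow,
      ENNReal.toReal_ofReal hθ0, ENNReal.toReal_ofReal h1θ.le, smul_eq_mul, hJdef]
    ring
  -- centered integrals
  set c := ∫ z, g z ∂π with hcdef
  have hcent_iter : ∫ y, (g y - c) ∂(iter P k x) = (∫ y, g y ∂(iter P k x)) - c := by
    haveI := hprob_iter k x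
    rw [integral_sub (hint_iter k x) (integrable_const c), integral_const, probReal_univ]
    simp
  have hcent_bind : ∀ i, ∫ y, (g y - c) ∂(μ.bind (iter P i)) = J i - c := by
    intro i
    haveI := hprob_bind i
    rw [integral_sub (hint_bind i) (integrable_const c), integral_const, probReal_univ, hJdef]
    simp
  rw [hQk, hpiQ, hcent_iter]
  have htsum1 : ∑' i : ℕ, θ ^ (k + i) * ∫ y, (g y - c) ∂(μ.bind (iter P (k + i)))
      = (∑' i : ℕ, θ ^ (i + k) * J (i + k)) - c * θ ^ k * (1-θ)⁻¹ := by
    have hcong : ∀ i : ℕ, θ ^ (k + i) * ∫ y, (g y - c) ∂(μ.bind (iter P (k + i)))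
        = θ ^ (i + k) * J (i + k) - θ ^ (i + k) * c := by
      intro i
      rw [add_comm k i, hcent_bind (i + k)]
      ring
    have hs1 : Summable fun i : ℕ => θ ^ (i + k) * J (i + k) :=
      (summable_nat_add_iff k).2 hsumJ
    have hs2 : Summable fun i : ℕ => θ ^ (i + k) * c := by
      have he : (fun i : ℕ => θ ^ (i + k) * c) = fun i : ℕ => (c * θ ^ k) * θ ^ i :=
        funext fun i => by rw [pow_add]; ring
      rw [he]; exact hgeo.mul_left _
    rw [tsum_congr hcong, Summable.tsum_sub hs1 hs2]
    congr 1
    calc ∑' i : ℕ, θ ^ (i + k) * c = ∑' i : ℕ, (c * θ ^ k) * θ ^ i :=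
          tsum_congr fun i => by rw [pow_add]; ring
      _ = (c * θ ^ k) * ∑' i : ℕ, θ ^ i := tsum_mul_left
      _ = c * θ ^ k * (1-θ)⁻¹ := by rw [tsum_geometric_of_lt_one hθ0 hθ1]
  rw [htsum1, ← Finset.mul_sum]
  have hshift := Summable.sum_add_tsum_nat_add k hsumJ
  have hinv : (1-θ) * (1-θ)⁻¹ = 1 := mul_inv_cancel₀ h1θ.ne'
  set T := ∑ i ∈ Finset.range k, θ ^ i * J i with hT
  set U := ∑' i : ℕ, θ ^ (i + k) * J (i + k) with hU
  set S := ∑' i : ℕ, θ ^ i * J i with hS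
  -- hshift : T + U = S
  linear_combination (1-θ) * hshift - θ ^ k * c * hinv
end MixtureKernelIdentity
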